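/- For a multiple model of N LTI systems, the approximate model detection problem (AMDP) is solvable if and only if the exact model detection problem (EMDP) is solvable; equivalently, the AMDP is solvable if and only if the multiple model (with noise inputs set to zero) is model detectable. -/

import Mathlib

/-!
Statement 16: For a multiple model of N LTI systems (with noise inputs), the
approximate model detection problem (AMDP) is solvable if and only if the exact
model detection problem (EMDP) is solvable; equivalently, the AMDP is solvable if
and only if the multiple model (with noise inputs set to zero) is model
detectable.
-/

open Matrix Polynomial

noncomputable section

/-- A real rational function is proper. -/
def RatFunc.IsProperR (f : RatFunc ℝ) : Prop :=
  f.num.natDegree ≤ f.denom.natDegree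

/-- A real rational function is stable (continuous time). -/
def RatFunc.IsStableR (f : RatFunc ℝ) : Prop :=
  ∀ z : ℂ, (f.denom.map (algebraMap ℝ ℂ)).IsRoot z → z.re < 0

/-- A rational matrix is proper if all its entries are proper. -/
def Matrix.IsProperR {m n : Type*} (G : Matrix m n (RatFunc ℝ)) : Prop :=
  ∀ i j, (G i j).IsProperR

/-- A rational matrix is stable if all its entries are stable. -/
def Matrix.IsStableR {m n : Type*} (G : Matrix m n (RatFunc ℝ)) : Prop :=
  ∀ i j, (G i j).IsStableR

/-- The `H∞`-norm of a real rational matrix. -/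
noncomputable def hinfNorm {m n : Type*} [Fintype m] [Fintype n]
    (G : Matrix m n (RatFunc ℝ)) : ℝ :=
  ⨆ ω : ℝ, ⨆ i : m, ⨆ j : n,
    ‖RatFunc.eval (algebraMap ℝ ℂ) (Complex.I * ω) (G i j)‖

/-- Solvability of the exact model detection problem (EMDP) for the multiple
model with noise inputs set to zero: N proper stable filters with exact
decoupling of the own model and stable internal forms whose control channel is
nonzero for each other model. -/
def EMDPSolvable {N p mu : ℕ} {md : Fin N → ℕ}
    (Gu : ∀ _ : Fin N, Matrix (Fin p) (Fin mu) (RatFunc ℝ))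
    (Gd : ∀ j : Fin N, Matrix (Fin p) (Fin (md j)) (RatFunc ℝ)) : Prop :=
  ∃ (q : Fin N → ℕ)
    (Q : ∀ i : Fin N, Matrix (Fin (q i)) (Fin p ⊕ Fin mu) (RatFunc ℝ)),
    (∀ i : Fin N, (Q i).IsProperR ∧ (Q i).IsStableR) ∧
    (∀ i : Fin N,
      Q i * Matrix.fromRows (Matrix.fromCols (Gu i) (Gd i))
        (Matrix.fromCols (1 : Matrix (Fin mu) (Fin mu) (RatFunc ℝ))
          (0 : Matrix (Fin mu) (Fin (md i)) (RatFunc ℝ))) = 0) ∧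
    (∀ i j : Fin N,
      (Q i * Matrix.fromRows (Matrix.fromCols (Gu j) (Gd j))
        (Matrix.fromCols (1 : Matrix (Fin mu) (Fin mu) (RatFunc ℝ))
          (0 : Matrix (Fin mu) (Fin (md j)) (RatFunc ℝ)))).IsStableR) ∧
    (∀ i j : Fin N, i ≠ j →
      Q i * Matrix.fromRows (Gu j) (1 : Matrix (Fin mu) (Fin mu) (RatFunc ℝ)) ≠ 0)

/-- Solvability of the approximate model detection problem (AMDP): for every
`ε > 0` there are N proper stable filters achieving the EMDP conditions and,
in addition, stable noise channels with `‖R_w^{(i,i)}‖_∞ < ε`. -/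
def AMDPSolvable {N p mu : ℕ} {md mw : Fin N → ℕ}
    (Gu : ∀ _ : Fin N, Matrix (Fin p) (Fin mu) (RatFunc ℝ))
    (Gd : ∀ j : Fin N, Matrix (Fin p) (Fin (md j)) (RatFunc ℝ))
    (Gw : ∀ j : Fin N, Matrix (Fin p) (Fin (mw j)) (RatFunc ℝ)) : Prop :=
  ∀ ε : ℝ, 0 < ε →
    ∃ (q : Fin N → ℕ)
      (Q : ∀ i : Fin N, Matrix (Fin (q i)) (Fin p ⊕ Fin mu) (RatFunc ℝ)),
      (∀ i : Fin N, (Q i).IsProperR ∧ (Q i).IsStableR) ∧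
      (∀ i : Fin N,
        Q i * Matrix.fromRows (Matrix.fromCols (Gu i) (Gd i))
          (Matrix.fromCols (1 : Matrix (Fin mu) (Fin mu) (RatFunc ℝ))
            (0 : Matrix (Fin mu) (Fin (md i)) (RatFunc ℝ))) = 0) ∧
      (∀ i j : Fin N,
        (Q i * Matrix.fromRows (Matrix.fromCols (Gu j) (Gd j))
          (Matrix.fromCols (1 : Matrix (Fin mu) (Fin mu) (RatFunc ℝ))
            (0 : Matrix (Fin mu) (Fin (md j)) (RatFunc ℝ)))).IsStableR) ∧
      (∀ i j : Fin N, i ≠ j →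
        Q i * Matrix.fromRows (Gu j) (1 : Matrix (Fin mu) (Fin mu) (RatFunc ℝ)) ≠ 0) ∧
      (∀ i j : Fin N,
        (Q i * Matrix.fromRows (Gw j)
          (0 : Matrix (Fin mu) (Fin (mw j)) (RatFunc ℝ))).IsStableR) ∧
      (∀ i : Fin N,
        hinfNorm (Q i * Matrix.fromRows (Gw i)
          (0 : Matrix (Fin mu) (Fin (mw i)) (RatFunc ℝ))) < ε)

namespace AMDPAux

variable {F : Type*} [Field F]

lemma rank_lt_of_vecMul {m n n' : Type*} [Fintype m] [Fintype n] [Fintype n']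
    [DecidableEq n] [DecidableEq n']
    (A : Matrix m n F) (B : Matrix m n' F) (v : m → F)
    (hA : v ᵥ* A = 0) (hB : v ᵥ* B ≠ 0) :
    A.rank < (fromCols A B).rank := by
  classical
  have hle : LinearMap.range A.mulVecLin ≤ LinearMap.range (fromCols A B).mulVecLin := by
    rintro x ⟨y, rfl⟩
    exact ⟨Sum.elim y 0, by simp [fromCols_mulVec_sumElim]⟩
  obtain ⟨l, hl⟩ : ∃ l, (v ᵥ* B) l ≠ 0 := by
    by_contra h; push_neg at h; exact hB (funext h)
  have hmem : B *ᵥ Pi.single l 1 ∈ LinearMap.range (fromCols A B).mulVecLin :=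
    ⟨Sum.elim 0 (Pi.single l 1), by simp [fromCols_mulVec_sumElim]; rfl⟩
  have hnmem : B *ᵥ Pi.single l 1 ∉ LinearMap.range A.mulVecLin := by
    rintro ⟨y, hy⟩
    apply hl
    have h1 : v ⬝ᵥ (A *ᵥ y) = 0 := by rw [dotProduct_mulVec, hA, zero_dotProduct]
    have h2 : v ⬝ᵥ (B *ᵥ Pi.single l 1) = (v ᵥ* B) l := by
      rw [dotProduct_mulVec, dotProduct_single, mul_one]
    rw [← h2, ← hy]
    simpa using h1
  have hlt : LinearMap.range A.mulVecLin < LinearMap.range (fromCols A B).mulVecLin :=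
    lt_of_le_of_ne hle (fun h => hnmem (h ▸ hmem))
  exact Submodule.finrank_lt_finrank_of_lt hlt

lemma exists_vecMul_of_rank_lt {m n n' : Type*} [Fintype m] [Fintype n] [Fintype n']
    [DecidableEq n] [DecidableEq n']
    {A : Matrix m n F} {B : Matrix m n' F}
    (h : A.rank < (fromCols A B).rank) :
    ∃ v : m → F, v ᵥ* A = 0 ∧ v ᵥ* B ≠ 0 := by
  classical
  have hns : ¬ (LinearMap.range (fromCols A B).mulVecLin ≤ LinearMap.range A.mulVecLin) := by
    intro hcon
    exact (Submodule.finrank_mono hcon).not_gt h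
  obtain ⟨b, hb, hbn⟩ := SetLike.not_le_iff_exists.mp hns
  obtain ⟨f, hf0, hfmap⟩ :=
    Submodule.exists_dual_map_eq_bot_of_notMem (p := LinearMap.range A.mulVecLin) hbn inferInstance
  have hker : LinearMap.range A.mulVecLin ≤ LinearMap.ker f := by
    intro x hx
    have : f x ∈ Submodule.map f (LinearMap.range A.mulVecLin) := ⟨x, hx, rfl⟩
    rw [hfmap] at this
    exact (Submodule.mem_bot F).mp this
  set v : m → F := fun k => f (Pi.single k 1) with hv
  have hfx : ∀ x : m → F, f x = v ⬝ᵥ x := by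
    intro x
    conv_lhs => rw [pi_eq_sum_univ x]
    rw [map_sum]
    have hterm : ∀ k, f (x k • fun j => if k = j then (1:F) else 0) = v k * x k := by
      intro k
      rw [_root_.map_smul]
      have hs : (fun j => if k = j then (1:F) else 0) = Pi.single k 1 := by
        funext j; rw [Pi.single_apply]; simp [eq_comm]
      rw [hs]; simp [hv, smul_eq_mul, mul_comm]
    simp only [hterm]
    simp [dotProduct]
  refine ⟨v, ?_, ?_⟩
  · funext j
    have hmem : A *ᵥ Pi.single j 1 ∈ LinearMap.range A.mulVecLin := ⟨Pi.single j 1, rfl⟩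
    have := hker hmem
    rw [LinearMap.mem_ker, hfx] at this
    rw [dotProduct_mulVec, dotProduct_single, mul_one] at this
    simpa using this
  · intro hcon
    obtain ⟨y, hy⟩ := hb
    apply hf0
    have hy' : b = A *ᵥ (y ∘ Sum.inl) + B *ᵥ (y ∘ Sum.inr) := by
      rw [← hy]
      rw [show (fromCols A B).mulVecLin y = fromCols A B *ᵥ y from rfl]
      conv_lhs => rw [← Sum.elim_comp_inl_inr y]
      rw [fromCols_mulVec_sumElim]
    have h1 : f (A *ᵥ (y ∘ Sum.inl)) = 0 := hker ⟨_, rfl⟩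
    have h2 : f (B *ᵥ (y ∘ Sum.inr)) = 0 := by
      rw [hfx, dotProduct_mulVec, hcon, zero_dotProduct]
    rw [hy', map_add, h1, h2, add_zero]

lemma exists_vecMul_forall [Infinite F] {m n n' : Type*} [Fintype m] [Fintype n] [Fintype n']
    {ι : Type*} [Fintype ι]
    (A : Matrix m n F) (B : ι → Matrix m n' F)
    (h : ∀ j, ∃ v, v ᵥ* A = 0 ∧ v ᵥ* (B j) ≠ 0) :
    ∃ v, v ᵥ* A = 0 ∧ ∀ j, v ᵥ* (B j) ≠ 0 := by
  classical
  set W := LinearMap.ker A.vecMulLinear with hW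
  set P : ι → Subspace F W :=
    fun j => Submodule.comap W.subtype (LinearMap.ker (B j).vecMulLinear) with hP
  have hps : (⊤ : Subspace F W) ∉ Finset.image P Finset.univ := by
    simp only [Finset.mem_image, Finset.mem_univ, true_and, not_exists]
    intro j hj
    obtain ⟨v, hv1, hv2⟩ := h j
    have hvW : v ∈ W := by simp [hW, LinearMap.mem_ker, hv1]
    have : (⟨v, hvW⟩ : W) ∈ P j := hj ▸ Submodule.mem_top
    simp only [hP, Submodule.mem_comap, Submodule.subtype_apply, LinearMap.mem_ker] at this
    exact hv2 (by simpa using this)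
  have hne := Subspace.biUnion_ne_univ_of_top_notMem hps
  obtain ⟨x, hx⟩ := (Set.ne_univ_iff_exists_notMem _).mp hne
  have hxW : (x : m → F) ᵥ* A = 0 := by
    have h2 := x.2
    exact LinearMap.mem_ker.mp h2
  refine ⟨(x : m → F), hxW, fun j => ?_⟩
  intro hj
  apply hx
  simp only [Set.mem_iUnion]
  refine ⟨P j, Finset.mem_image.mpr ⟨j, Finset.mem_univ j, rfl⟩, ?_⟩
  simp only [SetLike.mem_coe, hP, Submodule.mem_comap, Submodule.subtype_apply,
    LinearMap.mem_ker]
  simpa using hj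


/-- The canonical form `P / (X+1)^M`. -/
def stdForm (P : ℝ[X]) (M : ℕ) : RatFunc ℝ :=
  algebraMap ℝ[X] (RatFunc ℝ) P / algebraMap ℝ[X] (RatFunc ℝ) ((X + 1) ^ M)

lemma X_add_one_ne_zero : ((X : ℝ[X]) + 1) ≠ 0 := by
  intro h
  have := congrArg (fun q : ℝ[X] => q.coeff 1) h
  simp [Polynomial.coeff_one] at this

lemma X_add_one_pow_ne_zero (M : ℕ) : ((X : ℝ[X]) + 1) ^ M ≠ 0 :=
  pow_ne_zero _ X_add_one_ne_zero

lemma natDegree_X_add_one_pow (M : ℕ) : (((X : ℝ[X]) + 1) ^ M).natDegree = M := by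
  rw [natDegree_pow]
  have : ((X : ℝ[X]) + 1) = X + C 1 := by rw [Polynomial.C_1]
  rw [this, natDegree_X_add_C, mul_one]

lemma stdForm_cross (P : ℝ[X]) (M : ℕ) :
    (stdForm P M).num * ((X + 1) ^ M) = P * (stdForm P M).denom := by
  have hq : algebraMap ℝ[X] (RatFunc ℝ) ((X + 1) ^ M) ≠ 0 :=
    RatFunc.algebraMap_ne_zero (X_add_one_pow_ne_zero M)
  have hd : algebraMap ℝ[X] (RatFunc ℝ) (stdForm P M).denom ≠ 0 :=
    RatFunc.algebraMap_ne_zero (stdForm P M).denom_ne_zero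
  have key : algebraMap ℝ[X] (RatFunc ℝ) ((stdForm P M).num * ((X + 1) ^ M))
      = algebraMap ℝ[X] (RatFunc ℝ) (P * (stdForm P M).denom) := by
    rw [_root_.map_mul, _root_.map_mul, ← div_eq_div_iff hd hq, RatFunc.num_div_denom]
    rfl
  exact RatFunc.algebraMap_injective ℝ key

lemma stdForm_denom_dvd (P : ℝ[X]) (M : ℕ) : (stdForm P M).denom ∣ (X + 1) ^ M :=
  RatFunc.denom_div_dvd P ((X + 1) ^ M)

lemma stdForm_stable (P : ℝ[X]) (M : ℕ) : (stdForm P M).IsStableR := by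
  intro z hz
  obtain ⟨e, he⟩ := stdForm_denom_dvd P M
  have h0 : ((((X : ℝ[X]) + 1) ^ M).map (algebraMap ℝ ℂ)).eval z = 0 := by
    rw [he, Polynomial.map_mul, eval_mul, hz, zero_mul]
  have h1 : (z + 1) ^ M = 0 := by
    simpa [Polynomial.map_pow, Polynomial.map_add] using h0
  have h2 : z + 1 = 0 := by
    by_contra hc
    exact pow_ne_zero M hc h1
  have h3 : z.re + 1 = 0 := by
    have := congrArg Complex.re h2
    simpa using this
  linarith

lemma stdForm_zero (M : ℕ) : stdForm 0 M = 0 := by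
  simp [stdForm]

lemma stdForm_proper (P : ℝ[X]) (M : ℕ) (h : P.natDegree ≤ M) :
    (stdForm P M).IsProperR := by
  by_cases hP : P = 0
  · subst hP
    rw [stdForm_zero]
    simp [RatFunc.IsProperR]
  · have hne : stdForm P M ≠ 0 :=
      div_ne_zero (RatFunc.algebraMap_ne_zero hP)
        (RatFunc.algebraMap_ne_zero (X_add_one_pow_ne_zero M))
    have hnum : (stdForm P M).num ≠ 0 := RatFunc.num_ne_zero hne
    have cross := stdForm_cross P M
    have hdeg := congrArg natDegree cross
    rw [natDegree_mul hnum (X_add_one_pow_ne_zero M),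
      natDegree_mul hP (stdForm P M).denom_ne_zero, natDegree_X_add_one_pow] at hdeg
    unfold RatFunc.IsProperR
    omega

lemma stdForm_sub (P P' : ℝ[X]) (M : ℕ) :
    stdForm P M - stdForm P' M = stdForm (P - P') M := by
  rw [stdForm, stdForm, stdForm, div_sub_div_same, ← map_sub]

lemma stdForm_neg (P : ℝ[X]) (M : ℕ) : -stdForm P M = stdForm (-P) M := by
  rw [stdForm, stdForm, ← neg_div, ← _root_.map_neg]

lemma stdForm_C_mul (c : ℝ) (P : ℝ[X]) (M : ℕ) :
    algebraMap ℝ[X] (RatFunc ℝ) (C c) * stdForm P M = stdForm (C c * P) M := by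
  rw [stdForm, stdForm, ← mul_div_assoc, ← _root_.map_mul]

lemma stdForm_ne_zero {P : ℝ[X]} (hP : P ≠ 0) (M : ℕ) : stdForm P M ≠ 0 :=
  div_ne_zero (RatFunc.algebraMap_ne_zero hP)
    (RatFunc.algebraMap_ne_zero (X_add_one_pow_ne_zero M))

lemma denom_dvd_mul_stdForm (f : RatFunc ℝ) {D : ℝ[X]} (hD : D ≠ 0)
    (hdvd : f.denom ∣ D) (M : ℕ) :
    ∃ P : ℝ[X], stdForm D M * f = stdForm P M ∧
      P.natDegree ≤ f.num.natDegree + D.natDegree := by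
  obtain ⟨e, he⟩ := hdvd
  have hd : algebraMap ℝ[X] (RatFunc ℝ) f.denom ≠ 0 :=
    RatFunc.algebraMap_ne_zero f.denom_ne_zero
  refine ⟨f.num * e, ?_, ?_⟩
  · have hfd : f * algebraMap ℝ[X] (RatFunc ℝ) f.denom = algebraMap ℝ[X] (RatFunc ℝ) f.num := by
      have h := RatFunc.num_div_denom f
      rw [div_eq_iff hd] at h
      exact h.symm
    have h1 : algebraMap ℝ[X] (RatFunc ℝ) D * f
        = algebraMap ℝ[X] (RatFunc ℝ) (f.num * e) := by
      calc algebraMap ℝ[X] (RatFunc ℝ) D * f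
          = algebraMap ℝ[X] (RatFunc ℝ) e * (f * algebraMap ℝ[X] (RatFunc ℝ) f.denom) := by
            rw [he, _root_.map_mul]; ring
        _ = algebraMap ℝ[X] (RatFunc ℝ) (f.num * e) := by
            rw [hfd, ← _root_.map_mul, mul_comm]
    rw [stdForm, stdForm, div_mul_eq_mul_div, h1]
  · refine le_trans (natDegree_mul_le) ?_
    have hedvd : e ∣ D := ⟨f.denom, by rw [he, mul_comm]⟩
    have := Polynomial.natDegree_le_of_dvd hedvd hD
    omega

lemma stdForm_eval (P : ℝ[X]) (M : ℕ) {z : ℂ} (hz : z + 1 ≠ 0) :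
    RatFunc.eval (algebraMap ℝ ℂ) z (stdForm P M)
      = P.eval₂ (algebraMap ℝ ℂ) z / (z + 1) ^ M := by
  have hqz : (((X : ℝ[X]) + 1) ^ M).eval₂ (algebraMap ℝ ℂ) z = (z + 1) ^ M := by
    simp [eval₂_pow]
  have hde : (stdForm P M).denom.eval₂ (algebraMap ℝ ℂ) z ≠ 0 := by
    obtain ⟨e, he⟩ := stdForm_denom_dvd P M
    intro h0
    have : (((X : ℝ[X]) + 1) ^ M).eval₂ (algebraMap ℝ ℂ) z = 0 := by
      rw [he, eval₂_mul, h0, zero_mul]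
    rw [hqz] at this
    exact pow_ne_zero M hz this
  have cross := congrArg (Polynomial.eval₂ (algebraMap ℝ ℂ) z) (stdForm_cross P M)
  rw [eval₂_mul, eval₂_mul, hqz] at cross
  rw [RatFunc.eval, div_eq_div_iff hde (pow_ne_zero M hz)]
  rw [cross]

lemma stdForm_abs_eval_le (P : ℝ[X]) (M : ℕ) (h : P.natDegree ≤ M) (ω : ℝ) :
    ‖RatFunc.eval (algebraMap ℝ ℂ) (Complex.I * ω) (stdForm P M)‖
      ≤ ∑ k ∈ Finset.range (M + 1), |P.coeff k| := by
  set z : ℂ := Complex.I * ω with hzdef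
  have hz : z + 1 ≠ 0 := by
    intro h0
    have := congrArg Complex.re h0
    simp [hzdef] at this
  rw [stdForm_eval P M hz, norm_div, norm_pow]
  set m : ℝ := max 1 |ω| with hm
  have hm1 : (1 : ℝ) ≤ m := le_max_left _ _
  have hm0 : (0 : ℝ) ≤ m := le_trans zero_le_one hm1
  have hzabs : m ≤ ‖z + 1‖ := by
    apply max_le
    · calc (1:ℝ) = |(z+1).re| := by simp [hzdef]
        _ ≤ ‖z+1‖ := Complex.abs_re_le_norm _
    · calc |ω| = |(z+1).im| := by simp [hzdef]
        _ ≤ ‖z+1‖ := Complex.abs_im_le_norm _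
  have habsz : ‖z‖ = |ω| := by simp [hzdef]
  set Cs : ℝ := ∑ k ∈ Finset.range (M + 1), |P.coeff k| with hCs
  have hCs0 : 0 ≤ Cs := Finset.sum_nonneg fun _ _ => abs_nonneg _
  have hnum : ‖P.eval₂ (algebraMap ℝ ℂ) z‖ ≤ Cs * m ^ M := by
    rw [Polynomial.eval₂_eq_sum_range]
    refine le_trans (norm_sum_le _ _) ?_
    have hterm : ∀ k ∈ Finset.range (P.natDegree + 1),
        ‖algebraMap ℝ ℂ (P.coeff k) * z ^ k‖ ≤ |P.coeff k| * m ^ M := by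
      intro k hk
      rw [norm_mul, norm_pow, habsz]
      have h1 : ‖algebraMap ℝ ℂ (P.coeff k)‖ = |P.coeff k| := by
        simp
      rw [h1]
      refine mul_le_mul_of_nonneg_left ?_ (abs_nonneg _)
      calc |ω| ^ k ≤ m ^ k := pow_le_pow_left₀ (abs_nonneg _) (le_max_right _ _) k
        _ ≤ m ^ M := pow_le_pow_right₀ hm1 (by
            have := Finset.mem_range.mp hk; omega)
    refine le_trans (Finset.sum_le_sum hterm) ?_
    rw [← Finset.sum_mul]
    refine mul_le_mul_of_nonneg_right ?_ (pow_nonneg hm0 M)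
    refine Finset.sum_le_sum_of_subset_of_nonneg ?_ (fun _ _ _ => abs_nonneg _)
    exact Finset.range_subset_range.mpr (by omega)
  have hden0 : (0:ℝ) < ‖z + 1‖ ^ M :=
    pow_pos (lt_of_lt_of_le one_pos (le_trans hm1 hzabs)) M
  rw [div_le_iff₀ hden0]
  calc ‖P.eval₂ (algebraMap ℝ ℂ) z‖ ≤ Cs * m ^ M := hnum
    _ ≤ Cs * ‖z + 1‖ ^ M :=
        mul_le_mul_of_nonneg_left (pow_le_pow_left₀ hm0 hzabs M) hCs0


section MatrixBlocks

variable {R : Type*} [CommRing R] {rho : Type*} {p mu : ℕ}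

lemma fromColumns_add' {m n₁ n₂ : Type*} (A C : Matrix m n₁ R) (B D : Matrix m n₂ R) :
    fromCols A B + fromCols C D = fromCols (A + C) (B + D) := by
  ext i j
  cases j <;> simp [Matrix.fromCols]

lemma mul_TM {md : ℕ} (Q : Matrix rho (Fin p ⊕ Fin mu) R)
    (Gu' : Matrix (Fin p) (Fin mu) R) (Gd' : Matrix (Fin p) (Fin md) R) :
    Q * fromRows (fromCols Gu' Gd')
        (fromCols (1 : Matrix (Fin mu) (Fin mu) R) (0 : Matrix (Fin mu) (Fin md) R))
      = fromCols (Q.toCols₁ * Gu' + Q.toCols₂) (Q.toCols₁ * Gd') := by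
  conv_lhs => rw [← fromCols_toCols Q]
  rw [fromCols_mul_fromRows, mul_fromCols, mul_fromCols, Matrix.mul_one,
    Matrix.mul_zero, fromColumns_add', add_zero]

lemma mul_fromRows_one (Q : Matrix rho (Fin p ⊕ Fin mu) R) (Gu' : Matrix (Fin p) (Fin mu) R) :
    Q * fromRows Gu' (1 : Matrix (Fin mu) (Fin mu) R) = Q.toCols₁ * Gu' + Q.toCols₂ := by
  conv_lhs => rw [← fromCols_toCols Q]
  rw [fromCols_mul_fromRows, Matrix.mul_one]

lemma mul_fromRows_zero {w : ℕ} (Q : Matrix rho (Fin p ⊕ Fin mu) R)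
    (Gw' : Matrix (Fin p) (Fin w) R) :
    Q * fromRows Gw' (0 : Matrix (Fin mu) (Fin w) R) = Q.toCols₁ * Gw' := by
  conv_lhs => rw [← fromCols_toCols Q]
  rw [fromCols_mul_fromRows, Matrix.mul_zero, add_zero]

end MatrixBlocks

end AMDPAux

/-- **Solvability of the AMDP**: the AMDP is solvable iff the EMDP is solvable,
equivalently iff the multiple model (noise inputs set to zero) is model
detectable. -/
theorem amdp_solvable_iff
    (N p mu : ℕ) (md mw : Fin N → ℕ)
    (Gu : ∀ _ : Fin N, Matrix (Fin p) (Fin mu) (RatFunc ℝ))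
    (Gd : ∀ j : Fin N, Matrix (Fin p) (Fin (md j)) (RatFunc ℝ))
    (Gw : ∀ j : Fin N, Matrix (Fin p) (Fin (mw j)) (RatFunc ℝ)) :
    (AMDPSolvable Gu Gd Gw ↔ EMDPSolvable Gu Gd) ∧
      (AMDPSolvable Gu Gd Gw ↔
        ∀ i j : Fin N, j ≠ i →
          (Gd i).rank < (Matrix.fromCols (Gd i) (Gu i - Gu j)).rank) := by
  classical
  haveI : Infinite (RatFunc ℝ) := Infinite.of_injective _ (RatFunc.algebraMap_injective ℝ)
  -- EMDP implies model detectability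
  have h2 : EMDPSolvable Gu Gd → ∀ i j : Fin N, j ≠ i →
      (Gd i).rank < (Matrix.fromCols (Gd i) (Gu i - Gu j)).rank := by
    rintro ⟨q, Q, hps, h0, hst, hne⟩ i j hij
    have hzero := h0 i
    rw [AMDPAux.mul_TM] at hzero
    have hGd : (Q i).toCols₁ * Gd i = 0 := by
      funext a b
      have h := congrFun (congrFun hzero a) (Sum.inr b)
      simpa using h
    have hGu : (Q i).toCols₁ * Gu i + (Q i).toCols₂ = 0 := by
      funext a b
      have h := congrFun (congrFun hzero a) (Sum.inl b)
      simpa using h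
    have hQ2 : (Q i).toCols₂ = -((Q i).toCols₁ * Gu i) :=
      eq_neg_of_add_eq_zero_right hGu
    have hne' := hne i j (Ne.symm hij)
    rw [AMDPAux.mul_fromRows_one] at hne'
    have hvne : (Q i).toCols₁ * (Gu j - Gu i) ≠ 0 := by
      rw [Matrix.mul_sub]
      intro hcon
      apply hne'
      rw [hQ2, ← sub_eq_add_neg]
      exact hcon
    obtain ⟨a, b, hab⟩ : ∃ a b, ((Q i).toCols₁ * (Gu j - Gu i)) a b ≠ 0 := by
      by_contra hcon
      push_neg at hcon
      exact hvne (by funext a b; exact hcon a b)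
    refine AMDPAux.rank_lt_of_vecMul (Gd i) (Gu i - Gu j) (fun k => (Q i).toCols₁ a k) ?_ ?_
    · funext l
      have h := congrFun (congrFun hGd a) l
      simpa [Matrix.vecMul, dotProduct, Matrix.mul_apply] using h
    · intro hcon
      apply hab
      have hb := congrFun hcon b
      simp only [Matrix.vecMul, dotProduct, Pi.zero_apply, Matrix.sub_apply,
        mul_sub, Finset.sum_sub_distrib] at hb
      rw [Matrix.mul_apply]
      simp only [Matrix.sub_apply, mul_sub, Finset.sum_sub_distrib]
      linear_combination -hb
  -- model detectability implies AMDP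
  have h3 : (∀ i j : Fin N, j ≠ i →
      (Gd i).rank < (Matrix.fromCols (Gd i) (Gu i - Gu j)).rank) →
      AMDPSolvable Gu Gd Gw := by
    intro hrank ε hε
    have hv : ∀ i : Fin N, ∃ v : Fin p → RatFunc ℝ,
        v ᵥ* (Gd i) = 0 ∧ ∀ j, j ≠ i → v ᵥ* (Gu i - Gu j) ≠ 0 := by
      intro i
      obtain ⟨v, hv1, hv2⟩ := AMDPAux.exists_vecMul_forall (Gd i)
        (fun j : {j : Fin N // j ≠ i} => Gu i - Gu j.1)
        (fun j => AMDPAux.exists_vecMul_of_rank_lt (hrank i j.1 j.2))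
      exact ⟨v, hv1, fun j hj => hv2 ⟨j, hj⟩⟩
    have key : ∀ i : Fin N, ∃ Q : Matrix (Fin 1) (Fin p ⊕ Fin mu) (RatFunc ℝ),
        (Q.IsProperR ∧ Q.IsStableR) ∧
        (Q * Matrix.fromRows (Matrix.fromCols (Gu i) (Gd i))
          (Matrix.fromCols (1 : Matrix (Fin mu) (Fin mu) (RatFunc ℝ))
            (0 : Matrix (Fin mu) (Fin (md i)) (RatFunc ℝ))) = 0) ∧
        (∀ j, (Q * Matrix.fromRows (Matrix.fromCols (Gu j) (Gd j))
          (Matrix.fromCols (1 : Matrix (Fin mu) (Fin mu) (RatFunc ℝ))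
            (0 : Matrix (Fin mu) (Fin (md j)) (RatFunc ℝ)))).IsStableR) ∧
        (∀ j, j ≠ i →
          Q * Matrix.fromRows (Gu j) (1 : Matrix (Fin mu) (Fin mu) (RatFunc ℝ)) ≠ 0) ∧
        (∀ j, (Q * Matrix.fromRows (Gw j)
          (0 : Matrix (Fin mu) (Fin (mw j)) (RatFunc ℝ))).IsStableR) ∧
        hinfNorm (Q * Matrix.fromRows (Gw i)
          (0 : Matrix (Fin mu) (Fin (mw i)) (RatFunc ℝ))) < ε := by
      intro i
      obtain ⟨w, hw1, hw2⟩ := hv i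
      -- the common denominator
      set D : Polynomial ℝ := (∏ k, (w k).denom) *
        ∏ j : Fin N, ((∏ l, ((w ᵥ* Gu j) l).denom) * (∏ l, ((w ᵥ* Gd j) l).denom) *
          (∏ l, ((w ᵥ* Gw j) l).denom)) with hDdef
      have hD0 : D ≠ 0 := by
        refine mul_ne_zero (Finset.prod_ne_zero_iff.mpr fun _ _ => RatFunc.denom_ne_zero _) ?_
        refine Finset.prod_ne_zero_iff.mpr fun j _ => ?_
        exact mul_ne_zero (mul_ne_zero
          (Finset.prod_ne_zero_iff.mpr fun _ _ => RatFunc.denom_ne_zero _)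
          (Finset.prod_ne_zero_iff.mpr fun _ _ => RatFunc.denom_ne_zero _))
          (Finset.prod_ne_zero_iff.mpr fun _ _ => RatFunc.denom_ne_zero _)
      have hdvd_v : ∀ k, (w k).denom ∣ D := fun k =>
        Dvd.dvd.mul_right (Finset.dvd_prod_of_mem _ (Finset.mem_univ k)) _
      have hprod : ∀ j : Fin N, ((∏ l, ((w ᵥ* Gu j) l).denom) * (∏ l, ((w ᵥ* Gd j) l).denom) *
          (∏ l, ((w ᵥ* Gw j) l).denom)) ∣ D := by
        intro j
        refine Dvd.dvd.mul_left ?_ _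
        exact Finset.dvd_prod_of_mem
          (fun j => ((∏ l, ((w ᵥ* Gu j) l).denom) * (∏ l, ((w ᵥ* Gd j) l).denom) *
            (∏ l, ((w ᵥ* Gw j) l).denom))) (Finset.mem_univ j)
      have hdvd_Gu : ∀ j l, ((w ᵥ* Gu j) l).denom ∣ D := by
        intro j l
        have h1 : ((w ᵥ* Gu j) l).denom ∣ (∏ l, ((w ᵥ* Gu j) l).denom) :=
          Finset.dvd_prod_of_mem (fun l => ((w ᵥ* Gu j) l).denom) (Finset.mem_univ l)
        exact ((h1.mul_right _).mul_right _).trans (hprod j)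
      have hdvd_Gd : ∀ j l, ((w ᵥ* Gd j) l).denom ∣ D := by
        intro j l
        have h1 : ((w ᵥ* Gd j) l).denom ∣ (∏ l, ((w ᵥ* Gd j) l).denom) :=
          Finset.dvd_prod_of_mem (fun l => ((w ᵥ* Gd j) l).denom) (Finset.mem_univ l)
        exact ((h1.mul_left _).mul_right _).trans (hprod j)
      have hdvd_Gw : ∀ j l, ((w ᵥ* Gw j) l).denom ∣ D := by
        intro j l
        have h1 : ((w ᵥ* Gw j) l).denom ∣ (∏ l, ((w ᵥ* Gw j) l).denom) :=
          Finset.dvd_prod_of_mem (fun l => ((w ᵥ* Gw j) l).denom) (Finset.mem_univ l)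
        exact (h1.mul_left _).trans (hprod j)
      -- degree bookkeeping
      set Sv : ℕ := ∑ k, (w k).num.natDegree with hSv
      set Su : ℕ := ∑ l : Fin mu, ((w ᵥ* Gu i) l).num.natDegree with hSu
      set Sw : ℕ := ∑ l : Fin (mw i), ((w ᵥ* Gw i) l).num.natDegree with hSw
      set M : ℕ := D.natDegree + (Sv + Su + Sw) with hMdef
      choose Pv hPv1 hPv2 using fun k =>
        AMDPAux.denom_dvd_mul_stdForm (w k) hD0 (hdvd_v k) M
      choose PGu hPGu1 hPGu2 using fun (j : Fin N) (l : Fin mu) =>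
        AMDPAux.denom_dvd_mul_stdForm ((w ᵥ* Gu j) l) hD0 (hdvd_Gu j l) M
      choose PGd hPGd1 hPGd2 using fun (j : Fin N) (l : Fin (md j)) =>
        AMDPAux.denom_dvd_mul_stdForm ((w ᵥ* Gd j) l) hD0 (hdvd_Gd j l) M
      choose PGw hPGw1 hPGw2 using fun (j : Fin N) (l : Fin (mw j)) =>
        AMDPAux.denom_dvd_mul_stdForm ((w ᵥ* Gw j) l) hD0 (hdvd_Gw j l) M
      have hdegv : ∀ k, (Pv k).natDegree ≤ M := by
        intro k
        have h1 : (w k).num.natDegree ≤ Sv := by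
          rw [hSv]
          exact Finset.single_le_sum (f := fun k => (w k).num.natDegree)
            (fun _ _ => Nat.zero_le _) (Finset.mem_univ k)
        have h2 := hPv2 k
        omega
      have hdegu : ∀ l, (PGu i l).natDegree ≤ M := by
        intro l
        have h1 : ((w ᵥ* Gu i) l).num.natDegree ≤ Su := by
          rw [hSu]
          exact Finset.single_le_sum (f := fun l => ((w ᵥ* Gu i) l).num.natDegree)
            (fun _ _ => Nat.zero_le _) (Finset.mem_univ l)
        have h2 := hPGu2 i l
        omega
      have hdegw : ∀ l, (PGw i l).natDegree ≤ M := by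
        intro l
        have h1 : ((w ᵥ* Gw i) l).num.natDegree ≤ Sw := by
          rw [hSw]
          exact Finset.single_le_sum (f := fun l => ((w ᵥ* Gw i) l).num.natDegree)
            (fun _ _ => Nat.zero_le _) (Finset.mem_univ l)
        have h2 := hPGw2 i l
        omega
      -- the scaling constant
      set S : ℝ := ∑ l : Fin (mw i), ∑ k ∈ Finset.range (M + 1), |(PGw i l).coeff k| with hSdef
      have hS0 : 0 ≤ S :=
        Finset.sum_nonneg fun _ _ => Finset.sum_nonneg fun _ _ => abs_nonneg _
      set c : ℝ := ε / (2 * (S + 1)) with hcdef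
      have hc0 : 0 < c := div_pos hε (by linarith)
      set σ : RatFunc ℝ :=
        algebraMap (Polynomial ℝ) (RatFunc ℝ) (Polynomial.C c) * AMDPAux.stdForm D M with hσdef
      have hσ0 : σ ≠ 0 := by
        refine mul_ne_zero (RatFunc.algebraMap_ne_zero ?_) (AMDPAux.stdForm_ne_zero hD0 M)
        exact fun h => hc0.ne' (by simpa using congrArg (fun q => Polynomial.coeff q 0) h)
      have hσv : ∀ k, σ * w k = AMDPAux.stdForm (Polynomial.C c * Pv k) M := by
        intro k
        rw [hσdef, mul_assoc, hPv1 k, AMDPAux.stdForm_C_mul]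
      have hσGu : ∀ j l, σ * (w ᵥ* Gu j) l = AMDPAux.stdForm (Polynomial.C c * PGu j l) M := by
        intro j l
        rw [hσdef, mul_assoc, hPGu1 j l, AMDPAux.stdForm_C_mul]
      have hσGd : ∀ j l, σ * (w ᵥ* Gd j) l = AMDPAux.stdForm (Polynomial.C c * PGd j l) M := by
        intro j l
        rw [hσdef, mul_assoc, hPGd1 j l, AMDPAux.stdForm_C_mul]
      have hσGw : ∀ j l, σ * (w ᵥ* Gw j) l = AMDPAux.stdForm (Polynomial.C c * PGw j l) M := by
        intro j l
        rw [hσdef, mul_assoc, hPGw1 j l, AMDPAux.stdForm_C_mul]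
      -- the filter
      set A : Matrix (Fin 1) (Fin p) (RatFunc ℝ) := Matrix.of fun _ k => σ * w k with hAdef
      set B : Matrix (Fin 1) (Fin mu) (RatFunc ℝ) :=
        Matrix.of fun _ l => -(σ * (w ᵥ* Gu i) l) with hBdef
      have hmulA : ∀ {nc : ℕ} (G : Matrix (Fin p) (Fin nc) (RatFunc ℝ)) (a : Fin 1) (l : Fin nc),
          (A * G) a l = σ * (w ᵥ* G) l := by
        intro nc G a l
        simp [hAdef, Matrix.mul_apply, Matrix.vecMul, dotProduct,
          Finset.mul_sum, mul_assoc]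
      have hBapp : ∀ (a : Fin 1) (l : Fin mu), B a l = -(σ * (w ᵥ* Gu i) l) := fun a l => rfl
      refine ⟨Matrix.fromCols A B, ⟨?_, ?_⟩, ?_, ?_, ?_, ?_, ?_⟩
      · -- proper
        intro a x
        rcases x with k | l
        · rw [Matrix.fromCols_apply_inl]
          have he : A a k = AMDPAux.stdForm (Polynomial.C c * Pv k) M := hσv k
          rw [he]
          exact AMDPAux.stdForm_proper _ M
            (le_trans (Polynomial.natDegree_C_mul_le _ _) (hdegv k))
        · rw [Matrix.fromCols_apply_inr, hBapp, hσGu i l, AMDPAux.stdForm_neg]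
          refine AMDPAux.stdForm_proper _ M ?_
          rw [Polynomial.natDegree_neg]
          exact le_trans (Polynomial.natDegree_C_mul_le _ _) (hdegu l)
      · -- stable
        intro a x
        rcases x with k | l
        · rw [Matrix.fromCols_apply_inl]
          have he : A a k = AMDPAux.stdForm (Polynomial.C c * Pv k) M := hσv k
          rw [he]
          exact AMDPAux.stdForm_stable _ M
        · rw [Matrix.fromCols_apply_inr, hBapp, hσGu i l, AMDPAux.stdForm_neg]
          exact AMDPAux.stdForm_stable _ M
      · -- exact decoupling at i
        rw [AMDPAux.mul_TM, Matrix.toCols₁_fromCols, Matrix.toCols₂_fromCols]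
        have hz1 : A * Gu i + B = 0 := by
          funext a l
          rw [Matrix.add_apply, hmulA, hBapp]
          simp
        have hz2 : A * Gd i = 0 := by
          funext a l
          rw [hmulA]
          have hl : (w ᵥ* Gd i) l = 0 := congrFun hw1 l
          rw [hl, mul_zero]
          simp
        rw [hz1, hz2, Matrix.fromCols_zero]
      · -- stability of all internal forms
        intro j
        rw [AMDPAux.mul_TM, Matrix.toCols₁_fromCols, Matrix.toCols₂_fromCols]
        intro a x
        rcases x with l | l
        · rw [Matrix.fromCols_apply_inl]
          have he : (A * Gu j + B) a l =
              AMDPAux.stdForm (Polynomial.C c * PGu j l - Polynomial.C c * PGu i l) M := by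
            rw [Matrix.add_apply, hmulA, hBapp, hσGu j l, hσGu i l, ← sub_eq_add_neg,
              AMDPAux.stdForm_sub]
          rw [he]
          exact AMDPAux.stdForm_stable _ M
        · rw [Matrix.fromCols_apply_inr]
          have he : (A * Gd j) a l = AMDPAux.stdForm (Polynomial.C c * PGd j l) M := by
            rw [hmulA, hσGd j l]
          rw [he]
          exact AMDPAux.stdForm_stable _ M
      · -- nonzero control channels
        intro j hj
        rw [AMDPAux.mul_fromRows_one, Matrix.toCols₁_fromCols,
          Matrix.toCols₂_fromCols]
        intro hcon
        obtain ⟨l, hl⟩ : ∃ l, (w ᵥ* (Gu i - Gu j)) l ≠ 0 := by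
          by_contra hc
          push_neg at hc
          exact hw2 j hj (funext hc)
        have hent := congrFun (congrFun hcon 0) l
        rw [Matrix.add_apply, hmulA, hBapp] at hent
        apply hl
        have hsub : (w ᵥ* (Gu i - Gu j)) l = (w ᵥ* Gu i) l - (w ᵥ* Gu j) l := by
          rw [Matrix.vecMul_sub]
          rfl
        rw [hsub]
        have hmz : σ * ((w ᵥ* Gu j) l - (w ᵥ* Gu i) l) = 0 := by
          rw [mul_sub]
          have h0 : (0 : Matrix (Fin 1) (Fin mu) (RatFunc ℝ)) 0 l = 0 := rfl
          rw [h0] at hent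
          linear_combination hent
        have h2 := (mul_eq_zero.mp hmz).resolve_left hσ0
        linear_combination -h2
      · -- stability of noise channels
        intro j
        rw [AMDPAux.mul_fromRows_zero, Matrix.toCols₁_fromCols]
        intro a l
        have he : (A * Gw j) a l = AMDPAux.stdForm (Polynomial.C c * PGw j l) M := by
          rw [hmulA, hσGw j l]
        rw [he]
        exact AMDPAux.stdForm_stable _ M
      · -- small own noise channel
        rw [AMDPAux.mul_fromRows_zero, Matrix.toCols₁_fromCols]
        have hb : ∀ (ω : ℝ) (a : Fin 1) (l : Fin (mw i)),
            ‖RatFunc.eval (algebraMap ℝ ℂ) (Complex.I * ω) ((A * Gw i) a l)‖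
              ≤ c * S := by
          intro ω a l
          have he : (A * Gw i) a l = AMDPAux.stdForm (Polynomial.C c * PGw i l) M := by
            rw [hmulA, hσGw i l]
          rw [he]
          refine le_trans (AMDPAux.stdForm_abs_eval_le _ M
            (le_trans (Polynomial.natDegree_C_mul_le _ _) (hdegw l)) ω) ?_
          have hsum : ∑ k ∈ Finset.range (M + 1), |(Polynomial.C c * PGw i l).coeff k|
              = c * ∑ k ∈ Finset.range (M + 1), |(PGw i l).coeff k| := by
            rw [Finset.mul_sum]
            refine Finset.sum_congr rfl fun k _ => ?_
            rw [Polynomial.coeff_C_mul, abs_mul, abs_of_pos hc0]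
          rw [hsum]
          refine mul_le_mul_of_nonneg_left ?_ hc0.le
          rw [hSdef]
          exact Finset.single_le_sum
            (f := fun l => ∑ k ∈ Finset.range (M + 1), |(PGw i l).coeff k|)
            (fun _ _ => Finset.sum_nonneg fun _ _ => abs_nonneg _) (Finset.mem_univ l)
        have hcS : 0 ≤ c * S := mul_nonneg hc0.le hS0
        have hle : hinfNorm (A * Gw i) ≤ c * S := by
          unfold hinfNorm
          exact Real.iSup_le (fun ω => Real.iSup_le (fun a => Real.iSup_le
            (fun l => hb ω a l) hcS) hcS) hcS
        have hfin : c * S < ε := by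
          have hS1 : (S + 1) ≠ 0 := by linarith
          have h1 : c * (S + 1) = ε / 2 := by
            rw [hcdef]
            field_simp
          nlinarith
        exact lt_of_le_of_lt hle hfin
    choose Q hQ using key
    exact ⟨fun _ => 1, Q, fun i => (hQ i).1, fun i => (hQ i).2.1, fun i j => (hQ i).2.2.1 j,
      fun i j hij => (hQ i).2.2.2.1 j (Ne.symm hij), fun i j => (hQ i).2.2.2.2.1 j,
      fun i => (hQ i).2.2.2.2.2⟩
  have h1 : AMDPSolvable Gu Gd Gw → EMDPSolvable Gu Gd := by
    intro hyp
    obtain ⟨q, Q, hps, h0, hst, hne, _, _⟩ := hyp 1 one_pos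
    exact ⟨q, Q, hps, h0, hst, hne⟩
  exact ⟨⟨h1, fun hE => h3 (h2 hE)⟩, ⟨fun hA => h2 (h1 hA), h3⟩⟩



end
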